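/- Let (L(P),⊢) be a disjunctive sequent calculus. For any logical state S and any finite subset Γ of S, the set [Γ]_S = ⋂{W : W is a logical state and Γ ⊆ W ⊆ S} is a compact element of the dcpo (|(L(P),⊢)|,⊆) of all logical states ordered by inclusion. -/

import Mathlib

/- ## Syntax of disjunctive propositional logic -/

/-- Raw formulae over a set `P` of atomic formulae: atoms, the constants
`T` and `F`, binary conjunction, and disjunction of an arbitrary family
of formulae. -/
inductive Fm (P : Type) : Type 1 where
  | atom : P → Fm P
  | tt : Fm P
  | ff : Fm P
  | conj : Fm P → Fm P → Fm P
  | disj : {ι : Type} → (ι → Fm P) → Fm P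

namespace Fm

/-- The valid sequents of the disjunctive sequent calculus generated from the
disjunctive basis `(P, A)`, where `A` is the set of atomic disjointness
assumptions `p₁,…,pₙ ⊢ F` (each given by a finite nonempty set of atoms). -/
inductive Seq {P : Type} (A : Set (Set P)) : Set (Fm P) → Fm P → Prop where
  | ax {s : Set P} : s ∈ A → s.Finite → s.Nonempty → Seq A (Fm.atom '' s) Fm.ff
  | id (φ : Fm P) : Seq A {φ} φ
  | lwk {Γ : Set (Fm P)} {ψ : Fm P} (φ : Fm P) : Seq A Γ ψ → Seq A (insert φ Γ) ψ
  | cut {Γ Δ : Set (Fm P)} {φ ψ : Fm P} :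
      Seq A Γ φ → Seq A (insert φ Δ) ψ → Seq A (Γ ∪ Δ) ψ
  | lf (φ : Fm P) : Seq A {Fm.ff} φ
  | rt : Seq A ∅ Fm.tt
  | landl {Γ : Set (Fm P)} {φ ψ θ : Fm P} :
      Seq A (insert φ (insert ψ Γ)) θ → Seq A (insert (Fm.conj φ ψ) Γ) θ
  | randr {Γ Δ : Set (Fm P)} {φ ψ : Fm P} :
      Seq A Γ φ → Seq A Δ ψ → Seq A (Γ ∪ Δ) (Fm.conj φ ψ)
  | ldisj {Γ : Set (Fm P)} {θ : Fm P} {ι : Type} {f : ι → Fm P} :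
      (∀ i, Seq A (insert (f i) Γ) θ) → (∀ i j, i ≠ j → Seq A {f i, f j} Fm.ff) →
      Seq A (insert (Fm.disj f) Γ) θ
  | rdisj {Γ : Set (Fm P)} {ι : Type} {f : ι → Fm P} (i₀ : ι) :
      Seq A Γ (f i₀) → (∀ i j, i ≠ j → Seq A {f i, f j} Fm.ff) →
      Seq A Γ (Fm.disj f)

/-- The wellformed formulae `L(P)` generated from the disjunctive basis
`(P, A)`: disjunctions are only formed over provably pairwise disjoint
families. -/
inductive WF {P : Type} (A : Set (Set P)) : Fm P → Prop where
  | atom (p : P) : WF A (Fm.atom p)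
  | tt : WF A Fm.tt
  | ff : WF A Fm.ff
  | conj {φ ψ : Fm P} : WF A φ → WF A ψ → WF A (Fm.conj φ ψ)
  | disj {ι : Type} {f : ι → Fm P} : (∀ i, WF A (f i)) →
      (∀ i j, i ≠ j → Seq A {f i, f j} Fm.ff) → WF A (Fm.disj f)

end Fm

/- ## Generic notions relative to a wellformedness predicate `W` (the set
`L(P)` of formulae) and an entailment relation `E` (the valid sequents). -/

section Defs

variable {P Q R : Type}

/-- `φ` is a tautology: `T ⊢ φ` is valid. -/
def Taut (W : Fm P → Prop) (E : Set (Fm P) → Fm P → Prop) (φ : Fm P) : Prop :=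
  W φ ∧ E {Fm.tt} φ

/-- `φ` is a contradiction: `φ ⊢ F` is valid. -/
def Contra (W : Fm P → Prop) (E : Set (Fm P) → Fm P → Prop) (φ : Fm P) : Prop :=
  W φ ∧ E {φ} Fm.ff

/-- `φ` is satisfiable: neither a tautology nor a contradiction. -/
def Satisfiable (W : Fm P → Prop) (E : Set (Fm P) → Fm P → Prop) (φ : Fm P) : Prop :=
  W φ ∧ ¬ Taut W E φ ∧ ¬ Contra W E φ

/-- Built up from atomic formulae only by conjunctive connectives. -/
inductive ConjShape {P : Type} : Fm P → Prop where
  | atom (p : P) : ConjShape (Fm.atom p)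
  | conj {φ ψ : Fm P} : ConjShape φ → ConjShape ψ → ConjShape (Fm.conj φ ψ)

/-- A conjunction: a satisfiable formula built up from atomic formulae only
by conjunctive connectives. -/
def IsConjForm (W : Fm P → Prop) (E : Set (Fm P) → Fm P → Prop) (φ : Fm P) : Prop :=
  ConjShape φ ∧ Satisfiable W E φ

/-- `X[⊢] = {φ ∈ L(P) : Γ ⊢ φ is valid for some finite Γ ⊆ X}`. -/
def entClose (W : Fm P → Prop) (E : Set (Fm P) → Fm P → Prop) (X : Set (Fm P)) :
    Set (Fm P) :=
  {φ | W φ ∧ ∃ Γ : Set (Fm P), Γ ⊆ X ∧ Γ.Finite ∧ E Γ φ}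

/-- A logical state: a nonempty proper subset `S` of `L(P)` such that
(S1) any flat formula `⋁̇ᵢ μᵢ` in `S` has some disjunct `μᵢ₀ ∈ S`, and
(S2) `S[⊢] ⊆ S`. -/
structure IsLogicalState (W : Fm P → Prop) (E : Set (Fm P) → Fm P → Prop)
    (S : Set (Fm P)) : Prop where
  nonempty : S.Nonempty
  subset : S ⊆ {φ | W φ}
  proper : S ≠ {φ | W φ}
  s1 : ∀ (ι : Type) (f : ι → Fm P), (∀ i, IsConjForm W E (f i)) →
      (∀ i j, i ≠ j → E {f i, f j} Fm.ff) → Satisfiable W E (Fm.disj f) →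
      Fm.disj f ∈ S → ∃ i, f i ∈ S
  s2 : entClose W E S ⊆ S

/-- `[X]_S`: the intersection of all logical states `T` with `X ⊆ T ⊆ S`. -/
def clIn (W : Fm P → Prop) (E : Set (Fm P) → Fm P → Prop) (X S : Set (Fm P)) :
    Set (Fm P) :=
  ⋂₀ {T | IsLogicalState W E T ∧ X ⊆ T ∧ T ⊆ S}

/-- An irreducible conjunction. -/
def IsIrredConj (W : Fm P → Prop) (E : Set (Fm P) → Fm P → Prop) (μ : Fm P) : Prop :=
  IsConjForm W E μ ∧ ∀ (ι : Type) (f : ι → Fm P), (∀ i, W (f i)) →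
    (∀ i j, i ≠ j → E {f i, f j} Fm.ff) → E {μ} (Fm.disj f) → ∃ i, E {μ} (f i)

/-- An expressive disjunctive sequent calculus: every satisfiable formula is
logically equivalent to an irreducible flat formula (from below disjunctwise). -/
def Expressive (W : Fm P → Prop) (E : Set (Fm P) → Fm P → Prop) : Prop :=
  ∀ ψ : Fm P, Satisfiable W E ψ → ∃ (ι : Type) (f : ι → Fm P),
    (∀ i, IsIrredConj W E (f i)) ∧ (∀ i j, i ≠ j → E {f i, f j} Fm.ff) ∧
    Satisfiable W E (Fm.disj f) ∧ E {ψ} (Fm.disj f) ∧ ∀ i, E {f i} ψ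

/-- `Θ[X] = {φ ∈ L(Q) : (μ,φ) ∈ Θ for some μ ∈ X ∩ IC(P)}`. -/
def ThetaImage (WP : Fm P → Prop) (EP : Set (Fm P) → Fm P → Prop)
    (Θ : Fm P → Fm Q → Prop) (X : Set (Fm P)) : Set (Fm Q) :=
  {φ | ∃ μ ∈ X, IsIrredConj WP EP μ ∧ Θ μ φ}

/-- A consequence relation `Θ ⊆ IC(P) × L(Q)` satisfying (R1), (R2), (R3). -/
def IsConsRel (WP : Fm P → Prop) (EP : Set (Fm P) → Fm P → Prop)
    (WQ : Fm Q → Prop) (EQ : Set (Fm Q) → Fm Q → Prop)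
    (Θ : Fm P → Fm Q → Prop) : Prop :=
  (∀ μ ψ, Θ μ ψ → IsIrredConj WP EP μ ∧ WQ ψ) ∧
  (∀ μ ν ψ, IsIrredConj WP EP μ → EP {μ} ν → Θ ν ψ → Θ μ ψ) ∧
  (∀ μ φ ψ, WQ ψ → Θ μ φ → EQ {φ} ψ → Θ μ ψ) ∧
  (∀ μ ψ, Θ μ ψ → ∃ ν, IsIrredConj WQ EQ ν ∧ Θ μ ν ∧ EQ {ν} ψ)

/-- Composition of consequence relations. -/
def consRelComp (WQ : Fm Q → Prop) (EQ : Set (Fm Q) → Fm Q → Prop)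
    (Θ : Fm P → Fm Q → Prop) (Θ' : Fm Q → Fm R → Prop) : Fm P → Fm R → Prop :=
  fun μ φ => ∃ ν, IsIrredConj WQ EQ ν ∧ Θ μ ν ∧ Θ' ν φ

/-- The identity consequence relation `(μ,φ) ∈ id_P ↔ φ ∈ {μ}[⊢_P]`. -/
def consRelId (W : Fm P → Prop) (E : Set (Fm P) → Fm P → Prop) : Fm P → Fm P → Prop :=
  fun μ φ => IsIrredConj W E μ ∧ φ ∈ entClose W E {μ}

end Defs

/-- The poset of logical states of the calculus generated by the basis `(P,A)`,
ordered by set inclusion. -/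
abbrev LSt (P : Type) (A : Set (Set P)) : Type 1 :=
  {S : Set (Fm P) // IsLogicalState (Fm.WF A) (Fm.Seq A) S}

/- ## Domain-theoretic notions -/

/-- A compact element of a poset (w.r.t. suprema of directed subsets). -/
def IsCompactElt {α : Type*} [PartialOrder α] (x : α) : Prop :=
  ∀ d : Set α, d.Nonempty → DirectedOn (· ≤ ·) d → ∀ s, IsLUB d s → x ≤ s →
    ∃ y ∈ d, x ≤ y

/-- An algebraic domain: a pointed dcpo in which every element is the
supremum of the directed set of compact elements below it. -/
def IsAlgebraicDomain (α : Type*) [PartialOrder α] : Prop :=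
  (∃ b : α, ∀ x, b ≤ x) ∧
  (∀ d : Set α, d.Nonempty → DirectedOn (· ≤ ·) d → ∃ s, IsLUB d s) ∧
  (∀ x : α, ({k : α | IsCompactElt k ∧ k ≤ x}).Nonempty ∧
    DirectedOn (· ≤ ·) {k : α | IsCompactElt k ∧ k ≤ x} ∧
    IsLUB {k : α | IsCompactElt k ∧ k ≤ x} x)

/-- An algebraic L-domain: an algebraic domain in which every principal ideal
`↓x` is a complete lattice (every subset of `↓x` has a supremum in `↓x`). -/
def IsAlgebraicLDomain (α : Type*) [PartialOrder α] : Prop :=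
  IsAlgebraicDomain α ∧
  ∀ x : α, ∀ T : Set α, T ⊆ Set.Iic x → ∃ s ∈ Set.Iic x,
    (∀ t ∈ T, t ≤ s) ∧ ∀ u ∈ Set.Iic x, (∀ t ∈ T, t ≤ u) → s ≤ u

/- ## The calculus associated with an algebraic L-domain -/

/-- The atomic formulae of the associated calculus: (upsets of) elements of
`K*(D)`, the compact non-bottom elements. -/
abbrev LAtom (D : Type) [PartialOrder D] : Type := {x : D // IsCompactElt x ∧ ¬ IsBot x}

/-- The interpretation `φ̂ ⊆ D` of a formula: `F, T, ∧, ⋁̇` become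
`∅, D`, intersection and union. -/
def hat {D : Type} [PartialOrder D] : Fm (LAtom D) → Set D
  | Fm.atom x => Set.Ici x.val
  | Fm.tt => Set.univ
  | Fm.ff => ∅
  | Fm.conj φ ψ => hat φ ∩ hat ψ
  | Fm.disj f => ⋃ i, hat (f i)

/-- The formulae `L(P_D)` of the associated calculus: disjunctions only of
families with pairwise disjoint interpretations. -/
inductive DWF {D : Type} [PartialOrder D] : Fm (LAtom D) → Prop where
  | atom (p : LAtom D) : DWF (Fm.atom p)
  | tt : DWF Fm.tt
  | ff : DWF Fm.ff
  | conj {φ ψ : Fm (LAtom D)} : DWF φ → DWF ψ → DWF (Fm.conj φ ψ)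
  | disj {ι : Type} {f : ι → Fm (LAtom D)} : (∀ i, DWF (f i)) →
      (∀ i j, i ≠ j → hat (f i) ∩ hat (f j) = ∅) → DWF (Fm.disj f)

/-- Validity in the associated calculus: `ψ₁,…,ψₙ ⊢_D φ` iff
`ψ̂₁ ∩ … ∩ ψ̂ₙ ⊆ φ̂`. -/
def DSeq {D : Type} [PartialOrder D] (Γ : Set (Fm (LAtom D))) (φ : Fm (LAtom D)) : Prop :=
  ⋂₀ (hat '' Γ) ⊆ hat φ

/-- A decomposable subset of `D`: the upper set `↑A` of a pairwise
inconsistent set `A` of compact elements. -/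
def IsDecomposable {D : Type} [PartialOrder D] (U : Set D) : Prop :=
  ∃ A : Set D, (∀ a ∈ A, IsCompactElt a) ∧
    (∀ a ∈ A, ∀ b ∈ A, a ≠ b → Set.Ici a ∩ Set.Ici b = ∅) ∧
    U = ⋃ a ∈ A, Set.Ici a

/-- The conjunction `↑x₁ ∧ ↑x₂ ∧ … ∧ ↑xₙ` of a nonempty list of atoms. -/
def bigConj {P : Type} (x : P) (l : List P) : Fm P :=
  l.foldl (fun φ y => Fm.conj φ (Fm.atom y)) (Fm.atom x)

section Stmt7Aux

variable {P : Type} {A : Set (Set P)}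

/-- `F` does not belong to any logical state. -/
lemma ff_not_mem_state {S : Set (Fm P)}
    (hS : IsLogicalState (Fm.WF A) (Fm.Seq A) S) : Fm.ff ∉ S := by
  intro hff
  apply hS.proper
  apply Set.Subset.antisymm hS.subset
  intro φ hφ
  exact hS.s2 ⟨hφ, {Fm.ff}, by simpa using hff, Set.finite_singleton _, Fm.Seq.lf φ⟩

/-- `T` belongs to every logical state. -/
lemma tt_mem_state {S : Set (Fm P)}
    (hS : IsLogicalState (Fm.WF A) (Fm.Seq A) S) : Fm.tt ∈ S :=
  hS.s2 ⟨Fm.WF.tt, ∅, Set.empty_subset _, Set.finite_empty, Fm.Seq.rt⟩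

/-- A nonempty intersection of logical states all contained in a common
logical state is again a logical state. -/
lemma sInter_state {S : Set (Fm P)}
    (hS : IsLogicalState (Fm.WF A) (Fm.Seq A) S)
    (𝒞 : Set (Set (Fm P))) (hne : 𝒞.Nonempty)
    (hmem : ∀ T ∈ 𝒞, IsLogicalState (Fm.WF A) (Fm.Seq A) T ∧ T ⊆ S) :
    IsLogicalState (Fm.WF A) (Fm.Seq A) (⋂₀ 𝒞) := by
  obtain ⟨T₀, hT₀⟩ := hne
  refine ⟨⟨Fm.tt, fun T hT => tt_mem_state (hmem T hT).1⟩, ?_, ?_, ?_, ?_⟩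
  · intro φ hφ
    exact (hmem T₀ hT₀).1.subset (hφ T₀ hT₀)
  · intro heq
    have : Fm.ff ∈ ⋂₀ 𝒞 := by rw [heq]; exact Fm.WF.ff
    exact ff_not_mem_state (hmem T₀ hT₀).1 (this T₀ hT₀)
  · intro ι f hconj hpair hsat hd
    obtain ⟨i₀, hi₀⟩ := (hmem T₀ hT₀).1.s1 ι f hconj hpair hsat (hd T₀ hT₀)
    refine ⟨i₀, fun T hT => ?_⟩
    obtain ⟨i, hi⟩ := (hmem T hT).1.s1 ι f hconj hpair hsat (hd T hT)
    rcases eq_or_ne i i₀ with rfl | hne'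
    · exact hi
    · exfalso
      apply ff_not_mem_state hS
      refine hS.s2 ⟨Fm.WF.ff, {f i, f i₀}, ?_, ?_, hpair i i₀ hne'⟩
      · intro x hx
        rcases hx with rfl | rfl
        · exact (hmem T hT).2 hi
        · exact (hmem T₀ hT₀).2 hi₀
      · exact (Set.finite_singleton _).insert _
  · intro φ hφ
    obtain ⟨hw, Γ', hΓ', hfin', hseq⟩ := hφ
    intro T hT
    exact (hmem T hT).1.s2 ⟨hw, Γ', fun x hx => hΓ' hx T hT, hfin', hseq⟩

/-- A finite subset of a directed union is contained in one member. -/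
lemma finite_subset_directed {α : Type*} {𝒮 : Set (Set α)} (hne : 𝒮.Nonempty)
    (hdir : DirectedOn (· ⊆ ·) 𝒮) {Γ : Set α} (hfin : Γ.Finite)
    (h : Γ ⊆ ⋃₀ 𝒮) : ∃ T ∈ 𝒮, Γ ⊆ T := by
  revert h
  refine Set.Finite.induction_on Γ hfin ?_ ?_
  · intro _
    exact ⟨hne.choose, hne.choose_spec, Set.empty_subset _⟩
  · intro a s _ _ ih h
    obtain ⟨T, hT, hsT⟩ := ih ((Set.subset_insert a s).trans h)
    obtain ⟨T', hT', haT'⟩ := h (Set.mem_insert a s)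
    obtain ⟨T'', hT'', h1, h2⟩ := hdir T hT T' hT'
    exact ⟨T'', hT'', Set.insert_subset (h2 haT') (hsT.trans h1)⟩

/-- A directed union of logical states is a logical state. -/
lemma sUnion_state (𝒮 : Set (Set (Fm P))) (hne : 𝒮.Nonempty)
    (hdir : DirectedOn (· ⊆ ·) 𝒮)
    (hst : ∀ T ∈ 𝒮, IsLogicalState (Fm.WF A) (Fm.Seq A) T) :
    IsLogicalState (Fm.WF A) (Fm.Seq A) (⋃₀ 𝒮) := by
  obtain ⟨T₀, hT₀⟩ := hne
  refine ⟨⟨Fm.tt, T₀, hT₀, tt_mem_state (hst T₀ hT₀)⟩, ?_, ?_, ?_, ?_⟩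
  · rintro φ ⟨T, hT, hφ⟩
    exact (hst T hT).subset hφ
  · intro heq
    have : Fm.ff ∈ ⋃₀ 𝒮 := by rw [heq]; exact Fm.WF.ff
    obtain ⟨T, hT, hφ⟩ := this
    exact ff_not_mem_state (hst T hT) hφ
  · rintro ι f hconj hpair hsat ⟨T, hT, hd⟩
    obtain ⟨i, hi⟩ := (hst T hT).s1 ι f hconj hpair hsat hd
    exact ⟨i, T, hT, hi⟩
  · rintro φ ⟨hw, Γ', hΓ', hfin', hseq⟩
    obtain ⟨T, hT, hsT⟩ := finite_subset_directed ⟨T₀, hT₀⟩ hdir hfin' hΓ'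
    exact ⟨T, hT, (hst T hT).s2 ⟨hw, Γ', hsT, hfin', hseq⟩⟩

end Stmt7Aux

/-- For a logical state `S` and a finite `Γ ⊆ S`, the set `[Γ]_S`
is a compact element of the dcpo of all logical states ordered by inclusion
(in which directed suprema are unions). -/
theorem stmt7 (P : Type) (A : Set (Set P)) (S : Set (Fm P))
    (hS : IsLogicalState (Fm.WF A) (Fm.Seq A) S)
    (Γ : Set (Fm P)) (hfin : Γ.Finite) (hΓ : Γ ⊆ S) :
    IsLogicalState (Fm.WF A) (Fm.Seq A) (clIn (Fm.WF A) (Fm.Seq A) Γ S) ∧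
    (∀ 𝒮 : Set (Set (Fm P)), 𝒮.Nonempty → DirectedOn (· ⊆ ·) 𝒮 →
      (∀ T ∈ 𝒮, IsLogicalState (Fm.WF A) (Fm.Seq A) T) →
      clIn (Fm.WF A) (Fm.Seq A) Γ S ⊆ ⋃₀ 𝒮 →
      ∃ T ∈ 𝒮, clIn (Fm.WF A) (Fm.Seq A) Γ S ⊆ T) := by
  set C := clIn (Fm.WF A) (Fm.Seq A) Γ S with hC
  have hSmem : S ∈ {T | IsLogicalState (Fm.WF A) (Fm.Seq A) T ∧ Γ ⊆ T ∧ T ⊆ S} :=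
    ⟨hS, hΓ, subset_rfl⟩
  have hCstate : IsLogicalState (Fm.WF A) (Fm.Seq A) C :=
    sInter_state hS _ ⟨S, hSmem⟩ (fun T hT => ⟨hT.1, hT.2.2⟩)
  have hΓC : Γ ⊆ C := fun x hx T hT => hT.2.1 hx
  have hCS : C ⊆ S := fun x hx => hx S hSmem
  refine ⟨hCstate, ?_⟩
  intro 𝒮 hne hdir hstates hsub
  have hU : IsLogicalState (Fm.WF A) (Fm.Seq A) (⋃₀ 𝒮) :=
    sUnion_state 𝒮 hne hdir hstates
  obtain ⟨T, hT, hΓT⟩ := finite_subset_directed hne hdir hfin (hΓC.trans hsub)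
  refine ⟨T, hT, ?_⟩
  have hVstate : IsLogicalState (Fm.WF A) (Fm.Seq A) (⋂₀ {C, T}) := by
    refine sInter_state hU {C, T} ⟨C, Or.inl rfl⟩ ?_
    intro W hW
    rcases hW with hW | hW
    · rw [hW]; exact ⟨hCstate, hsub⟩
    · rw [hW]; exact ⟨hstates T hT, Set.subset_sUnion_of_mem hT⟩
  have hVmem : ⋂₀ {C, T} ∈ {W | IsLogicalState (Fm.WF A) (Fm.Seq A) W ∧ Γ ⊆ W ∧ W ⊆ S} := by
    refine ⟨hVstate, ?_, ?_⟩
    · intro x hx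
      rintro W (rfl | rfl)
      · exact hΓC hx
      · exact hΓT hx
    · intro x hx
      exact hCS (hx C (Or.inl rfl))
  intro x hx
  exact hx (⋂₀ {C, T}) hVmem T (Or.inr rfl)
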